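/- Under the loss assumption and the cost assumption, the problem inf_{(φ_1,...,φ_K) ∈ 𝔄} −Σ_{i∈Y} ∫_X φ_i dμ_i, where 𝔄 := { (φ_1,...,φ_K) ∈ C_b(X)^K : min_{v∈Δ_Y} max_{m∈Δ_Y} Σ_{i∈Y} (ℓ(v,i) − φ_i^c(x̃)) m_i ≤ 0 for all x̃ ∈ X }, has the same value as the problem: infimum over (φ_i)_{i∈Y} ⊆ C_b(X) and Borel f : X → Δ_Y of −Σ_i ∫ φ_i dμ_i subject to −φ_i(x) + c(x, x̃) ≥ ℓ(f(x̃), i) for all x ∈ spt(μ_i), x̃ ∈ X, i ∈ Y. -/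

import Mathlib

open MeasureTheory Set Filter Topology Bornology
open scoped ENNReal BigOperators NNReal

noncomputable section

namespace AdvRobust

variable {X : Type*} {Y : Type*}

/-- The (topological) support of a Borel measure: points all of whose open
neighborhoods have positive measure. -/
def msupport [TopologicalSpace X] [MeasurableSpace X] (μ : Measure X) : Set X :=
  {x | ∀ U : Set X, IsOpen U → x ∈ U → 0 < μ U}

/-- Compactness/coercivity condition on a cost function. -/
def Coercive [MetricSpace X] (c : X → X → ℝ≥0∞) : Prop :=
  ∀ x x' : ℕ → X, IsBounded (Set.range x') →
    (∃ M : ℝ≥0∞, M ≠ ⊤ ∧ ∀ n, c (x n) (x' n) ≤ M) →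
    IsCompact (closure (Set.range fun n => (x n, x' n)))

/-- Assumption 1.2 on the cost function. -/
structure CostAssumption [MetricSpace X] (c : X → X → ℝ≥0∞) : Prop where
  lsc : LowerSemicontinuous (Function.uncurry c)
  diag : ∀ x, c x x = 0
  coer : Coercive c ∨ ∃ (B : ℝ≥0∞) (c₀ : X → X → ℝ≥0∞),
      0 < B ∧ B ≠ ⊤ ∧ Coercive c₀ ∧ ∀ x y, c x y = min (c₀ x y) B

/-- Assumption 1.1 on the loss function: convexity on the simplex, and
finiteness at some common point of the simplex. -/
structure LossAssumption [Fintype Y] (ℓ : (Y → ℝ) → Y → ℝ≥0∞) : Prop where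
  convex : ∀ i : Y, ∀ v ∈ stdSimplex ℝ Y, ∀ w ∈ stdSimplex ℝ Y, ∀ a b : ℝ,
      0 ≤ a → 0 ≤ b → a + b = 1 →
      ℓ (a • v + b • w) i ≤ ENNReal.ofReal a * ℓ v i + ENNReal.ofReal b * ℓ w i
  finite : ∃ v₀ ∈ stdSimplex ℝ Y, ∀ i : Y, ℓ v₀ i ≠ ⊤

/-- Optimal transport cost between two positive measures (`+∞` if there is
no coupling). -/
def OTCost [MeasurableSpace X] (c : X → X → ℝ≥0∞) (μ ν : Measure X) : ℝ≥0∞ :=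
  ⨅ (π : Measure (X × X)) (_ : π.map Prod.fst = μ) (_ : π.map Prod.snd = ν),
    ∫⁻ p, c p.1 p.2 ∂π

/-- The adversarial objective for a fixed classifier `f`. -/
def advObj [MeasurableSpace X] [Fintype Y]
    (c : X → X → ℝ≥0∞) (ℓ : (Y → ℝ) → Y → ℝ≥0∞) (μ : Y → Measure X)
    (f : X → Y → ℝ) : EReal :=
  ⨆ (μ' : Y → Measure X) (_ : ∀ i, IsFiniteMeasure (μ' i)),
    ((∑ i, ∫⁻ x, ℓ (f x) i ∂(μ' i) : ℝ≥0∞) : EReal)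
      - ((∑ i, OTCost c (μ i) (μ' i) : ℝ≥0∞) : EReal)

/-- The adversarial (learner-agnostic) value `V`. -/
def advValue [MeasurableSpace X] [Fintype Y]
    (c : X → X → ℝ≥0∞) (ℓ : (Y → ℝ) → Y → ℝ≥0∞) (μ : Y → Measure X) : EReal :=
  ⨅ (f : X → Y → ℝ) (_ : Measurable f) (_ : ∀ x, f x ∈ stdSimplex ℝ Y),
    advObj c ℓ μ f

/-- `c`-transform of `φ` relative to the set `S`. -/
def cTransform (c : X → X → ℝ≥0∞) (S : Set X) (φ : X → ℝ) (x' : X) : EReal :=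
  ⨅ x ∈ S, ((c x x' : EReal) - (φ x : EReal))

/-- The probability simplex over a subset `A` of labels. -/
def simplexOn [Fintype Y] (A : Finset Y) : Set (Y → ℝ) :=
  {m | (∀ i, 0 ≤ m i) ∧ (∀ i ∉ A, m i = 0) ∧ ∑ i ∈ A, m i = 1}

/-- `ℓ_A(m_A) = inf_{v ∈ Δ_Y} ∑_{i ∈ A} ℓ(v,i) m_i`. -/
def lossOn [Fintype Y] (ℓ : (Y → ℝ) → Y → ℝ≥0∞) (A : Finset Y) (m : Y → ℝ) : ℝ≥0∞ :=
  ⨅ v ∈ stdSimplex ℝ Y, ∑ i ∈ A, ENNReal.ofReal (m i) * ℓ v i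

/-- `c_A(x_A, m_A) = inf_{x̃ ∈ X} ∑_{i ∈ A} m_i c(x_i, x̃)`. -/
def costOn (c : X → X → ℝ≥0∞) (A : Finset Y) (x : Y → X) (m : Y → ℝ) : ℝ≥0∞ :=
  ⨅ x' : X, ∑ i ∈ A, ENNReal.ofReal (m i) * c (x i) x'

/-- Feasibility constraint of the dual problem (1.12). -/
def dualConstraint [TopologicalSpace X] [MeasurableSpace X] [Fintype Y]
    (c : X → X → ℝ≥0∞) (ℓ : (Y → ℝ) → Y → ℝ≥0∞) (μ : Y → Measure X)
    (φ : Y → X → ℝ) : Prop :=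
  ∀ (A : Finset Y) (x : Y → X), (∀ i ∈ A, x i ∈ msupport (μ i)) →
    (⨆ m ∈ simplexOn A,
      (((∑ i ∈ A, m i * φ i (x i) : ℝ) : EReal)
        + (lossOn ℓ A m : EReal) - (costOn c A x m : EReal))) ≤ 0

/-- Value of the dual problem (1.12) over tuples of bounded continuous functions. -/
def dualValueCb [MetricSpace X] [MeasurableSpace X] [Fintype Y]
    (c : X → X → ℝ≥0∞) (ℓ : (Y → ℝ) → Y → ℝ≥0∞) (μ : Y → Measure X) : EReal :=
  ⨅ (φ : Y → BoundedContinuousFunction X ℝ)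
    (_ : dualConstraint c ℓ μ (fun i => (φ i : X → ℝ))),
    (((- ∑ i, ∫ x, φ i x ∂(μ i)) : ℝ) : EReal)

/-- Value of the dual problem (1.12) over tuples from a family `G` of functions. -/
def dualValueG [TopologicalSpace X] [MeasurableSpace X] [Fintype Y]
    (c : X → X → ℝ≥0∞) (ℓ : (Y → ℝ) → Y → ℝ≥0∞) (μ : Y → Measure X)
    (G : Set (X → ℝ)) : EReal :=
  ⨅ (φ : Y → X → ℝ) (_ : ∀ i, φ i ∈ G) (_ : dualConstraint c ℓ μ φ),
    (((- ∑ i, ∫ x, φ i x ∂(μ i)) : ℝ) : EReal)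

/-- The nonnegative part of an extended real, as an extended nonnegative real. -/
def epos (e : EReal) : ℝ≥0∞ := if e = ⊤ then ⊤ else ENNReal.ofReal e.toReal

/-- Extended integral of an extended-real-valued function. -/
def eintegral [MeasurableSpace X] (μ : Measure X) (g : X → EReal) : EReal :=
  ((∫⁻ x, epos (g x) ∂μ : ℝ≥0∞) : EReal) - ((∫⁻ x, epos (-(g x)) ∂μ : ℝ≥0∞) : EReal)


lemma esub_nonpos {a b : EReal} (h : a ≤ b) : a - b ≤ 0 := by
  induction b with
  | bot => simp [le_bot_iff.1 h]
  | coe r =>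
      have : a + (-(r:ℝ) : EReal) ≤ (r : EReal) + (-(r:ℝ):EReal) := add_le_add_left h _
      simpa [sub_eq_add_neg, ← EReal.coe_neg, ← EReal.coe_add] using this
  | top => simp [EReal.sub_top]

lemma emul_nonpos {m : ℝ} (hm : 0 ≤ m) {a : EReal} (ha : a ≤ 0) : (m : EReal) * a ≤ 0 := by
  have := mul_le_mul_of_nonneg_left ha (show (0:EReal) ≤ (m:EReal) by exact_mod_cast hm)
  simpa using this

lemma isClosed_msupport [TopologicalSpace X] [MeasurableSpace X] (μ : Measure X) :
    IsClosed (msupport μ) := by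
  rw [← isOpen_compl_iff]
  have : (msupport μ)ᶜ = ⋃ U ∈ {U : Set X | IsOpen U ∧ μ U = 0}, U := by
    ext x
    simp only [msupport, mem_compl_iff, mem_setOf_eq, not_forall, mem_iUnion]
    constructor
    · rintro ⟨U, hU, hx, hpos⟩
      exact ⟨U, ⟨hU, by simpa using hpos⟩, hx⟩
    · rintro ⟨U, ⟨hU, h0⟩, hx⟩
      exact ⟨U, hU, hx, by simp [h0]⟩
  rw [this]
  exact isOpen_biUnion fun U hU => hU.1

lemma cTransform_ge (c : X → X → ℝ≥0∞) (S : Set X) (φ : X → ℝ) {C : ℝ}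
    (hC : ∀ x, φ x ≤ C) (x' : X) : ((-C : ℝ) : EReal) ≤ cTransform c S φ x' := by
  refine le_iInf₂ fun x _ => ?_
  have h1 : ((-C : ℝ) : EReal) ≤ ((-(φ x) : ℝ) : EReal) := by
    exact_mod_cast neg_le_neg (hC x)
  calc ((-C : ℝ) : EReal) ≤ ((-(φ x) : ℝ) : EReal) := h1
    _ = 0 + (-(φ x : EReal)) := by simp [EReal.coe_neg]
    _ ≤ (c x x' : EReal) + (-(φ x : EReal)) :=
        add_le_add_left (EReal.coe_ennreal_nonneg _) _
    _ = (c x x' : EReal) - (φ x : EReal) := by rw [sub_eq_add_neg]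

lemma cTransform_ne_bot (c : X → X → ℝ≥0∞) (S : Set X) (φ : X → ℝ) {C : ℝ}
    (hC : ∀ x, φ x ≤ C) (x' : X) : cTransform c S φ x' ≠ ⊥ :=
  fun h => by simpa [h] using cTransform_ge c S φ hC x'

lemma lsc_cTransform [MetricSpace X] {c : X → X → ℝ≥0∞} (hc : CostAssumption c)
    {S : Set X} (hS : IsClosed S) (φ : X → ℝ) (hφc : Continuous φ) {C : ℝ}
    (hφb : ∀ x, |φ x| ≤ C) : LowerSemicontinuous (cTransform c S φ) := by
  rw [lowerSemicontinuous_iff_isClosed_preimage]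
  intro y
  apply IsSeqClosed.isClosed
  intro z x' hz hzx
  simp only [mem_preimage, mem_Iic] at hz ⊢
  by_contra hcon
  have hy : y < cTransform c S φ x' := not_le.1 hcon
  obtain ⟨y', hy1, hy2⟩ := EReal.exists_between_coe_real hy
  have hex : ∀ n, ∃ x, x ∈ S ∧ (c x (z n) : EReal) - (φ x : EReal) < (y' : EReal) := by
    intro n
    have h : cTransform c S φ (z n) < (y' : EReal) := lt_of_le_of_lt (hz n) hy1
    rw [cTransform] at h
    simpa [iInf_lt_iff] using h
  set x : ℕ → X := fun n => (hex n).choose with hxdef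
  have hxS : ∀ n, x n ∈ S := fun n => (hex n).choose_spec.1
  have hlt : ∀ n, (c (x n) (z n) : EReal) - (φ (x n) : EReal) < (y' : EReal) :=
    fun n => (hex n).choose_spec.2
  have hlt' : ∀ n, (c (x n) (z n) : EReal) < ((y' + φ (x n) : ℝ) : EReal) := by
    intro n
    have := (EReal.sub_lt_iff (Or.inl (EReal.coe_ne_bot _))
      (Or.inl (EReal.coe_ne_top _))).1 (hlt n)
    exact_mod_cast this
  have hpos : ∀ n, (0 : ℝ) < y' + φ (x n) := by
    intro n
    have h0 := (EReal.coe_ennreal_nonneg (c (x n) (z n))).trans_lt (hlt' n)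
    exact_mod_cast h0
  have hbd2 : ∀ n, c (x n) (z n) ≤ ENNReal.ofReal (y' + φ (x n)) := by
    intro n
    rw [← EReal.coe_ennreal_le_coe_ennreal_iff]
    calc ((c (x n) (z n) : ℝ≥0∞) : EReal) ≤ ((y' + φ (x n) : ℝ) : EReal) := (hlt' n).le
      _ ≤ ((max (y' + φ (x n)) 0 : ℝ) : EReal) := by exact_mod_cast le_max_left _ _
      _ = ((ENNReal.ofReal (y' + φ (x n)) : ℝ≥0∞) : EReal) := by
          rw [EReal.coe_ennreal_ofReal]
  have hbd : ∀ n, c (x n) (z n) ≤ ENNReal.ofReal (y' + C) := by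
    intro n
    refine (hbd2 n).trans (ENNReal.ofReal_le_ofReal ?_)
    have := (abs_le.1 (hφb (x n))).2
    linarith
  have key : ∀ g : ℕ → ℕ, StrictMono g →
      IsCompact (closure (Set.range fun n => (x (g n), z (g n)))) → False := by
    intro g hg hK
    have hmem : ∀ n, (x (g n), z (g n)) ∈ closure (Set.range fun n => (x (g n), z (g n))) :=
      fun n => subset_closure (mem_range_self n)
    obtain ⟨⟨a₁, a₂⟩, -, g1, hg1, hconv⟩ := hK.tendsto_subseq hmem
    have hxlim : Tendsto (fun k => x (g (g1 k))) atTop (𝓝 a₁) :=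
      (continuous_fst.tendsto _).comp hconv
    have hzlim : Tendsto (fun k => z (g (g1 k))) atTop (𝓝 a₂) :=
      (continuous_snd.tendsto _).comp hconv
    have hzx' : Tendsto (fun k => z (g (g1 k))) atTop (𝓝 x') :=
      hzx.comp ((hg.comp hg1).tendsto_atTop)
    have ha₂ : x' = a₂ := tendsto_nhds_unique hzx' hzlim
    subst ha₂
    have ha₁S : a₁ ∈ S := hS.mem_of_tendsto hxlim (Eventually.of_forall fun k => hxS _)
    have hphilim : Tendsto (fun k => φ (x (g (g1 k)))) atTop (𝓝 (φ a₁)) :=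
      (hφc.tendsto a₁).comp hxlim
    have hsnn : 0 ≤ y' + φ a₁ := by
      have ht : Tendsto (fun k => y' + φ (x (g (g1 k)))) atTop (𝓝 (y' + φ a₁)) :=
        tendsto_const_nhds.add hphilim
      exact ge_of_tendsto' ht fun k => (hpos _).le
    have hca : c a₁ x' ≤ ENNReal.ofReal (y' + φ a₁) := by
      refine ENNReal.le_of_forall_pos_le_add fun ε hε _ => ?_
      have hδ : (0 : ℝ) < (ε : ℝ) := hε
      have h1 : c a₁ x' ≤ ENNReal.ofReal (y' + φ a₁ + ε) := by
        by_contra hlt2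
        push_neg at hlt2
        have hev0 := hc.lsc (a₁, x') _ hlt2
        have hev : ∀ᶠ k in atTop,
            ENNReal.ofReal (y' + φ a₁ + ε) < c (x (g (g1 k))) (z (g (g1 k))) := by
          filter_upwards [hconv.eventually hev0] with k hk
          exact hk
        have hev2 : ∀ᶠ k in atTop, φ (x (g (g1 k))) < φ a₁ + ε :=
          hphilim.eventually_lt_const (lt_add_of_pos_right _ hδ)
        obtain ⟨k, hk1, hk2⟩ := (hev.and hev2).exists
        have hcz : c (x (g (g1 k))) (z (g (g1 k))) ≤ ENNReal.ofReal (y' + φ a₁ + ε) :=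
          (hbd2 _).trans (ENNReal.ofReal_le_ofReal (by linarith))
        exact absurd hk1 (not_lt.2 hcz)
      calc c a₁ x' ≤ ENNReal.ofReal (y' + φ a₁ + ε) := h1
        _ ≤ ENNReal.ofReal (y' + φ a₁) + ENNReal.ofReal (ε : ℝ) := ENNReal.ofReal_add_le
        _ = ENNReal.ofReal (y' + φ a₁) + (ε : ℝ≥0∞) := by
            rw [ENNReal.ofReal_coe_nnreal]
    have hfin : cTransform c S φ x' ≤ (y' : EReal) := by
      have h2 : cTransform c S φ x' ≤ (c a₁ x' : EReal) - (φ a₁ : EReal) := iInf₂_le a₁ ha₁S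
      have h3 : ((c a₁ x' : ℝ≥0∞) : EReal) ≤ ((y' + φ a₁ : ℝ) : EReal) := by
        calc ((c a₁ x' : ℝ≥0∞) : EReal)
            ≤ ((ENNReal.ofReal (y' + φ a₁) : ℝ≥0∞) : EReal) :=
              EReal.coe_ennreal_le_coe_ennreal_iff.2 hca
          _ = ((max (y' + φ a₁) 0 : ℝ) : EReal) := EReal.coe_ennreal_ofReal
          _ = ((y' + φ a₁ : ℝ) : EReal) := by rw [max_eq_left hsnn]
      calc cTransform c S φ x' ≤ (c a₁ x' : EReal) - (φ a₁ : EReal) := h2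
        _ ≤ ((y' + φ a₁ : ℝ) : EReal) - (φ a₁ : EReal) := by
            rw [sub_eq_add_neg, sub_eq_add_neg]; exact add_le_add_left h3 _
        _ = (y' : EReal) := by
            rw [← EReal.coe_sub]; norm_num
    exact absurd hfin (not_le.2 hy2)
  rcases hc.coer with hco | ⟨B, c₀, hB0, hBt, hc₀, hmin⟩
  · refine key id strictMono_id ?_
    exact hco x z (Metric.isBounded_range_of_tendsto z hzx) ⟨_, ENNReal.ofReal_ne_top, hbd⟩
  · by_cases hfreq : ∃ᶠ n in atTop, c₀ (x n) (z n) ≤ B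
    · obtain ⟨g, hg, hgP⟩ := Filter.extraction_of_frequently_atTop hfreq
      refine key g hg ?_
      exact hc₀ (fun n => x (g n)) (fun n => z (g n))
        ((Metric.isBounded_range_of_tendsto z hzx).subset
          (range_subset_iff.2 fun n => mem_range_self _))
        ⟨B, hBt, hgP⟩
    · rw [Filter.not_frequently] at hfreq
      simp only [not_le] at hfreq
      obtain ⟨n, hn⟩ := hfreq.exists
      have hcB : c (x n) (z n) = B := by rw [hmin]; exact min_eq_right hn.le
      have h4 : ((B : ℝ≥0∞) : EReal) < ((y' + φ (x n) : ℝ) : EReal) := by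
        rw [← hcB]; exact hlt' n
      have hBr : ((B : ℝ≥0∞) : EReal) = ((B.toReal : ℝ) : EReal) := by
        rw [← EReal.toReal_coe_ennreal]
        exact (EReal.coe_toReal (by simp [hBt]) (EReal.coe_ennreal_ne_bot _)).symm
      have h5 : B.toReal < y' + φ (x n) := by
        rw [hBr] at h4; exact_mod_cast h4
      have h7 : (c (x n) x' : ℝ≥0∞) ≤ B := by rw [hmin]; exact min_le_right _ _
      have hfin : cTransform c S φ x' < (y' : EReal) := by
        calc cTransform c S φ x' ≤ (c (x n) x' : EReal) - (φ (x n) : EReal) :=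
              iInf₂_le _ (hxS n)
          _ ≤ ((B : ℝ≥0∞) : EReal) - (φ (x n) : EReal) := by
              rw [sub_eq_add_neg, sub_eq_add_neg]
              exact add_le_add_left (EReal.coe_ennreal_le_coe_ennreal_iff.2 h7) _
          _ = ((B.toReal - φ (x n) : ℝ) : EReal) := by rw [hBr, ← EReal.coe_sub]
          _ < (y' : EReal) := by exact_mod_cast (by linarith : B.toReal - φ (x n) < y')
      exact lt_irrefl _ (hy2.trans hfin)

lemma exists_measurable_selection [MetricSpace X] [TopologicalSpace.SeparableSpace X]
    [MeasurableSpace X] [BorelSpace X] [Nonempty X] [Fintype Y]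
    (h : Y → X → EReal) (hlsc : ∀ j, LowerSemicontinuous (h j))
    (hbot : ∀ j x, h j x ≠ ⊥) (ℓ : (Y → ℝ) → Y → ℝ≥0∞) {ε : ℝ} (hε : 0 < ε)
    (hex : ∀ x : X, ∃ v ∈ stdSimplex ℝ Y, ∀ j, h j x ≠ ⊤ →
      (ℓ v j : EReal) ≤ h j x + ((ε/2 : ℝ) : EReal)) :
    ∃ f : X → Y → ℝ, Measurable f ∧ (∀ x, f x ∈ stdSimplex ℝ Y) ∧
      ∀ x j, (ℓ (f x) j : EReal) ≤ h j x + ((ε : ℝ) : EReal) := by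
  classical
  have hmeas : ∀ j, Measurable (h j) := fun j => (hlsc j).measurable
  set T : X → Set Y := fun x => {j | h j x = ⊤} with hT
  have hXS : ∀ s : Set Y, MeasurableSet {x | T x = s} := by
    intro s
    have hrw : {x | T x = s} = ⋂ j, {x | (h j x = ⊤) ↔ j ∈ s} := by
      ext x
      simp only [mem_setOf_eq, mem_iInter, Set.ext_iff, hT]
    rw [hrw]
    refine MeasurableSet.iInter fun j => ?_
    have h1 : MeasurableSet {x | h j x = ⊤} := hmeas j (measurableSet_singleton ⊤)
    by_cases hj : j ∈ s
    · convert h1 using 1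
      ext x; simp [hj]
    · convert h1.compl using 1
      ext x; simp [hj]
  set v : X → (Y → ℝ) := fun x => (hex x).choose with hvdef
  have hv : ∀ x, v x ∈ stdSimplex ℝ Y ∧ ∀ j, h j x ≠ ⊤ →
      (ℓ (v x) j : EReal) ≤ h j x + ((ε/2:ℝ):EReal) :=
    fun x => ⟨(hex x).choose_spec.1, (hex x).choose_spec.2⟩
  set U : X → Set X := fun x₀ => ⋂ j, if h j x₀ = ⊤ then Set.univ
      else {x | (((h j x₀).toReal - ε/2 : ℝ) : EReal) < h j x} with hUdef
  have hUopen : ∀ x₀, IsOpen (U x₀) := by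
    intro x₀; refine isOpen_iInter_of_finite fun j => ?_
    by_cases hj : h j x₀ = ⊤
    · simp [hj]
    · simp only [hj, if_false]
      exact (hlsc j).isOpen_preimage _
  have hUmem : ∀ x₀, x₀ ∈ U x₀ := by
    intro x₀; refine mem_iInter.2 fun j => ?_
    by_cases hj : h j x₀ = ⊤
    · simp [hj]
    · simp only [hj, if_false, mem_setOf_eq]
      conv_rhs => rw [← EReal.coe_toReal hj (hbot j x₀)]
      exact_mod_cast (by linarith : (h j x₀).toReal - ε/2 < (h j x₀).toReal)
  have hgood : ∀ x₀, ∀ x ∈ U x₀, T x = T x₀ →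
      ∀ j, (ℓ (v x₀) j : EReal) ≤ h j x + ((ε:ℝ):EReal) := by
    intro x₀ x hxU hTx j
    by_cases hj : h j x₀ = ⊤
    · have hjx : h j x = ⊤ := by
        have : j ∈ T x := by rw [hTx]; exact hj
        exact this
      rw [hjx, EReal.top_add_of_ne_bot (EReal.coe_ne_bot ε)]
      exact le_top
    · have hmem := mem_iInter.1 hxU j
      simp only [hj, if_false, mem_setOf_eq] at hmem
      have h1 := (hv x₀).2 j hj
      rw [← EReal.coe_toReal hj (hbot j x₀)] at h1
      calc (ℓ (v x₀) j : EReal) ≤ (((h j x₀).toReal + ε/2 : ℝ) : EReal) := by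
            rw [EReal.coe_add]; exact h1
        _ = (((h j x₀).toReal - ε/2 : ℝ) : EReal) + ((ε:ℝ):EReal) := by
            rw [← EReal.coe_add]; norm_cast; ring
        _ ≤ h j x + ((ε:ℝ):EReal) := add_le_add_left hmem.le _
  have hsub : ∀ s : Set Y, ∃ Ts : Set X, Ts.Countable ∧ Ts ⊆ {x | T x = s} ∧
      {x | T x = s} ⊆ ⋃ t ∈ Ts, U t := by
    intro s
    haveI : SecondCountableTopology X :=
      UniformSpace.secondCountable_of_separable X
    obtain ⟨Tsub, hTc, hTeq⟩ := TopologicalSpace.isOpen_iUnion_countable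
      (fun t : {x | T x = s} => U ↑t) (fun t => hUopen _)
    refine ⟨Subtype.val '' Tsub, hTc.image _, ?_, ?_⟩
    · rintro y ⟨t, _, rfl⟩; exact t.2
    · intro x hx
      have hx2 : x ∈ ⋃ t : {x | T x = s}, U ↑t := mem_iUnion.2 ⟨⟨x, hx⟩, hUmem x⟩
      rw [← hTeq] at hx2
      obtain ⟨t, ht, hxt⟩ := mem_iUnion₂.1 hx2
      exact mem_biUnion ⟨t, ht, rfl⟩ hxt
  choose Ts hTsc hTsub hTscov using hsub
  set 𝒯 : Set X := ⋃ s : Set Y, Ts s with h𝒯def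
  have h𝒯c : 𝒯.Countable := countable_iUnion fun s => hTsc s
  have hcov0 : ∀ x : X, ∃ t ∈ 𝒯, x ∈ U t ∧ T t = T x := by
    intro x
    have hx : x ∈ {y | T y = T x} := rfl
    obtain ⟨t, ht, hxt⟩ := mem_iUnion₂.1 (hTscov (T x) hx)
    exact ⟨t, mem_iUnion.2 ⟨T x, ht⟩, hxt, hTsub (T x) ht⟩
  have h𝒯ne : 𝒯.Nonempty := by
    obtain ⟨x⟩ := ‹Nonempty X›
    obtain ⟨t, ht, -⟩ := hcov0 x
    exact ⟨t, ht⟩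
  obtain ⟨e, he⟩ := h𝒯c.exists_eq_range h𝒯ne
  set A : ℕ → Set X := fun n => U (e n) ∩ {x | T x = T (e n)} with hAdef
  have hAmeas : ∀ n, MeasurableSet (A n) :=
    fun n => ((hUopen _).measurableSet).inter (hXS _)
  have hAcov : ∀ x, ∃ n, x ∈ A n := by
    intro x
    obtain ⟨t, ht, hxt, hTt⟩ := hcov0 x
    rw [he] at ht
    obtain ⟨n, rfl⟩ := ht
    exact ⟨n, hxt, hTt.symm⟩
  refine ⟨fun x => v (e (Nat.find (hAcov x))), ?_, fun x => (hv _).1, ?_⟩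
  · have hg : Measurable fun x => Nat.find (hAcov x) := by
      refine measurable_to_countable' fun n => ?_
      have hset : (fun x => Nat.find (hAcov x)) ⁻¹' {n}
          = A n ∩ ⋂ m, ⋂ (_ : m < n), (A m)ᶜ := by
        ext x
        simp only [mem_preimage, mem_singleton_iff, Nat.find_eq_iff, mem_inter_iff,
          mem_iInter, mem_compl_iff]
      rw [hset]
      exact (hAmeas n).inter
        (MeasurableSet.iInter fun m => MeasurableSet.iInter fun _ => (hAmeas m).compl)
    have hcomp : Measurable ((fun n : ℕ => v (e n)) ∘ fun x => Nat.find (hAcov x)) :=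
      measurable_from_top.comp hg
    exact hcomp
  · intro x j
    have hn := Nat.find_spec (hAcov x)
    exact hgood (e _) x hn.1 hn.2 j

lemma ereal_le_coe_of_forall_add {a : EReal} {r : ℝ}
    (h : ∀ ε : ℝ, 0 < ε → a ≤ ((r + ε : ℝ) : EReal)) : a ≤ (r : EReal) := by
  by_contra hc
  obtain ⟨y, hy1, hy2⟩ := EReal.exists_between_coe_real (not_le.1 hc)
  have hry : r < y := by exact_mod_cast hy1
  have := h (y - r) (by linarith)
  rw [show (r + (y - r) : ℝ) = y by ring] at this
  exact absurd hy2 (not_lt.2 this)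

/-- Proposition 2.2: the problem over the admissible class `𝔄` (bounded
continuous tuples whose `c`-transforms satisfy the pointwise min-max
constraint) has the same value as problem (2.2) with `𝒢 = C_b(X)`. -/
theorem statement10
    {X Y : Type*} [MetricSpace X] [TopologicalSpace.SeparableSpace X] [CompleteSpace X]
    [MeasurableSpace X] [BorelSpace X] [Nonempty X]
    [Fintype Y] [Nonempty Y]
    (c : X → X → ℝ≥0∞) (hc : CostAssumption c)
    (ℓ : (Y → ℝ) → Y → ℝ≥0∞) (hℓ : LossAssumption ℓ)
    (μ : Y → Measure X) (hμfin : ∀ i, IsFiniteMeasure (μ i))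
    (hμ1 : ∑ i, μ i Set.univ = 1) :
    (⨅ (φ : Y → BoundedContinuousFunction X ℝ)
        (_ : ∀ x' : X,
          (⨅ v ∈ stdSimplex ℝ Y, ⨆ m ∈ stdSimplex ℝ Y,
            ∑ i, (m i : EReal) *
              ((ℓ v i : EReal) - cTransform c (msupport (μ i)) (φ i) x')) ≤ 0),
        (((- ∑ i, ∫ x, φ i x ∂(μ i)) : ℝ) : EReal))
    = ⨅ (φ : Y → BoundedContinuousFunction X ℝ)
        (f : X → Y → ℝ) (_ : Measurable f) (_ : ∀ x, f x ∈ stdSimplex ℝ Y)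
        (_ : ∀ (i : Y) (x x' : X), x ∈ msupport (μ i) →
          (ℓ (f x') i : EReal) ≤ (c x x' : EReal) - (φ i x : EReal)),
        (((- ∑ i, ∫ x, φ i x ∂(μ i)) : ℝ) : EReal) := by
  classical
  refine le_antisymm ?_ ?_
  · -- LHS ≤ RHS
    refine le_iInf fun φ => le_iInf fun f => le_iInf fun hfm => le_iInf fun hfs =>
      le_iInf fun hcon => ?_
    refine iInf₂_le φ ?_
    intro x'
    refine iInf₂_le_of_le (f x') (hfs x') ?_
    refine iSup₂_le fun m hm => ?_
    refine Finset.sum_nonpos fun i _ => ?_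
    refine emul_nonpos (hm.1 i) ?_
    refine esub_nonpos ?_
    exact le_iInf₂ fun x hx => hcon i x x' hx
  · -- RHS ≤ LHS
    refine le_iInf fun φ => le_iInf fun hφ => ?_
    refine ereal_le_coe_of_forall_add fun ε hε => ?_
    have habs : ∀ i : Y, ∀ x, |φ i x| ≤ ‖φ i‖ := fun i x => by
      simpa [Real.norm_eq_abs] using (φ i).norm_coe_le_norm x
    have hCb : ∀ i : Y, ∀ x, φ i x ≤ ‖φ i‖ := fun i x => (abs_le.1 (habs i x)).2
    have hbot : ∀ i (x' : X), cTransform c (msupport (μ i)) (φ i) x' ≠ ⊥ :=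
      fun i x' => cTransform_ne_bot c _ _ (hCb i) x'
    have hlsc : ∀ i, LowerSemicontinuous (cTransform c (msupport (μ i)) (φ i)) :=
      fun i => lsc_cTransform hc (isClosed_msupport _) _ (φ i).continuous (habs i)
    have hex : ∀ x' : X, ∃ v ∈ stdSimplex ℝ Y, ∀ j,
        cTransform c (msupport (μ j)) (φ j) x' ≠ ⊤ →
        (ℓ v j : EReal) ≤ cTransform c (msupport (μ j)) (φ j) x' + ((ε/2 : ℝ) : EReal) := by
      intro x'
      have h1 := lt_of_le_of_lt (hφ x')
        (show (0:EReal) < ((ε/2:ℝ):EReal) by exact_mod_cast half_pos hε)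
      rw [iInf_lt_iff] at h1
      obtain ⟨v, h1⟩ := h1
      rw [iInf_lt_iff] at h1
      obtain ⟨hvΔ, h1⟩ := h1
      refine ⟨v, hvΔ, fun j hj => ?_⟩
      have hej : (fun i => if i = j then (1:ℝ) else 0) ∈ stdSimplex ℝ Y := by
        constructor
        · intro i; dsimp only; split <;> norm_num
        · simp
      have h2 : ∑ i, (((if i = j then (1:ℝ) else 0) : ℝ) : EReal) *
          ((ℓ v i : EReal) - cTransform c (msupport (μ i)) (φ i) x')
          ≤ ⨆ m ∈ stdSimplex ℝ Y, ∑ i, ((m i : ℝ) : EReal) *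
            ((ℓ v i : EReal) - cTransform c (msupport (μ i)) (φ i) x') :=
        le_iSup₂ (f := fun (m : Y → ℝ) (_ : m ∈ stdSimplex ℝ Y) =>
          ∑ i, ((m i : ℝ) : EReal) *
            ((ℓ v i : EReal) - cTransform c (msupport (μ i)) (φ i) x'))
          (fun i => if i = j then (1:ℝ) else 0) hej
      have h3 : ∑ i, (((if i = j then (1:ℝ) else 0) : ℝ) : EReal) *
          ((ℓ v i : EReal) - cTransform c (msupport (μ i)) (φ i) x')
          = (ℓ v j : EReal) - cTransform c (msupport (μ j)) (φ j) x' := by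
        rw [Finset.sum_eq_single j]
        · simp
        · intro b _ hb; simp [hb]
        · simp
      have h4 : (ℓ v j : EReal) - cTransform c (msupport (μ j)) (φ j) x'
          < ((ε/2:ℝ):EReal) := lt_of_le_of_lt (h3 ▸ h2) h1
      rw [← EReal.coe_toReal hj (hbot j x')] at h4 ⊢
      have h5 := (EReal.sub_lt_iff (Or.inl (EReal.coe_ne_bot _))
        (Or.inl (EReal.coe_ne_top _))).1 h4
      rw [add_comm] at h5
      exact h5.le
    obtain ⟨f, hfm, hfs, hfP⟩ := exists_measurable_selection
      (fun i => cTransform c (msupport (μ i)) (φ i)) hlsc (fun j x => hbot j x) ℓ hε hex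
    set ψ : Y → BoundedContinuousFunction X ℝ :=
      fun i => φ i - BoundedContinuousFunction.const X ε with hψdef
    have hcon : ∀ (i : Y) (x x' : X), x ∈ msupport (μ i) →
        (ℓ (f x') i : EReal) ≤ (c x x' : EReal) - ((ψ i) x : EReal) := by
      intro i x x' hx
      have h1 : (ℓ (f x') i : EReal)
          ≤ cTransform c (msupport (μ i)) (φ i) x' + ((ε:ℝ):EReal) := hfP x' i
      have h2 : cTransform c (msupport (μ i)) (φ i) x'
          ≤ (c x x' : EReal) - ((φ i x : ℝ) : EReal) := iInf₂_le x hx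
      have h3 : ((ψ i) x : ℝ) = φ i x - ε := by simp [hψdef]
      calc (ℓ (f x') i : EReal)
          ≤ cTransform c (msupport (μ i)) (φ i) x' + ((ε:ℝ):EReal) := h1
        _ ≤ ((c x x' : EReal) - ((φ i x : ℝ) : EReal)) + ((ε:ℝ):EReal) :=
            add_le_add_left h2 _
        _ = (c x x' : EReal) - (((ψ i) x : ℝ) : EReal) := by
            rw [h3, sub_eq_add_neg, sub_eq_add_neg, add_assoc]
            congr 1
            rw [← EReal.coe_neg, ← EReal.coe_add, ← EReal.coe_neg]
            norm_cast
            ring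
    have hobj : (-∑ i, ∫ x, (ψ i) x ∂(μ i) : ℝ)
        = (-∑ i, ∫ x, φ i x ∂(μ i)) + ε := by
      have hint : ∀ i, ∫ x, (ψ i) x ∂(μ i)
          = ∫ x, φ i x ∂(μ i) - ε * (μ i Set.univ).toReal := by
        intro i
        have h1 : ∫ x, (φ i x - ε) ∂(μ i) = ∫ x, φ i x ∂(μ i) - ∫ _, ε ∂(μ i) :=
          integral_sub ((φ i).integrable (μ i)) (integrable_const ε)
        simpa [hψdef, integral_const, smul_eq_mul, mul_comm, measureReal_def] using h1
      rw [Finset.sum_congr rfl fun i _ => hint i, Finset.sum_sub_distrib, ← Finset.mul_sum]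
      have hsum : ∑ i, (μ i Set.univ).toReal = 1 := by
        rw [← ENNReal.toReal_sum fun i _ => measure_ne_top _ _, hμ1, ENNReal.toReal_one]
      rw [hsum]
      ring
    refine le_trans (iInf_le_of_le ψ (iInf_le_of_le f (iInf_le_of_le hfm
      (iInf_le_of_le hfs (iInf_le_of_le hcon (le_refl _)))))) ?_
    exact_mod_cast le_of_eq hobj


end AdvRobust
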